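/- Let p, q ∈ ℝ, let u, a, b : ℝ → ℝ with a and b differentiable, and suppose a′(x) = (a(x) − p)(u(x) − a(x)) and b′(x) = (b(x) − q)(u(x) − b(x)) for all x, and that p − q + b(x) − a(x) ≠ 0 for all x. Define w(x) = (p·b(x) − q·a(x)) / (p − q + b(x) − a(x)). Then w satisfies both Bäcklund relations: w′(x) = (w(x) − p)(b(x) − w(x)) and w′(x) = (w(x) − q)(a(x) − w(x)) for all x. -/

import Mathlib

/-- Nonlinear superposition formula (Bianchi permutability) for the Bäcklund
transformation of the Burgers hierarchy. -/
theorem burgers_superposition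
    (p q : ℝ) (u a b : ℝ → ℝ)
    (ha : ∀ x, HasDerivAt a ((a x - p) * (u x - a x)) x)
    (hb : ∀ x, HasDerivAt b ((b x - q) * (u x - b x)) x)
    (hden : ∀ x, p - q + b x - a x ≠ 0) :
    let w : ℝ → ℝ := fun x => (p * b x - q * a x) / (p - q + b x - a x)
    (∀ x, HasDerivAt w ((w x - p) * (b x - w x)) x) ∧
    (∀ x, HasDerivAt w ((w x - q) * (a x - w x)) x) := by
  intro w
  have key : ∀ x d, d = (w x - p) * (b x - w x) → HasDerivAt w d x := by
    intro x d hd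
    have hN : HasDerivAt (fun x => p * b x - q * a x)
        (p * ((b x - q) * (u x - b x)) - q * ((a x - p) * (u x - a x))) x :=
      ((hb x).const_mul p).sub ((ha x).const_mul q)
    have hD : HasDerivAt (fun x => p - q + b x - a x)
        ((b x - q) * (u x - b x) - (a x - p) * (u x - a x)) x := by
      have h1 := ((hasDerivAt_const x (p - q)).add (hb x)).sub (ha x)
      simp only [zero_add] at h1
      exact h1
    have h := hN.div hD (hden x)
    convert h using 1
    · rfl
    · rfl
    · rfl
    rw [hd]
    simp only [w]
    have h0 := hden x
    field_simp
    ring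
  have hpb : ∀ x, (w x - p) * (b x - w x) = (w x - q) * (a x - w x) := by
    intro x
    simp only [w]
    have h0 := hden x
    field_simp
    ring
  exact ⟨fun x => key x _ rfl, fun x => key x _ (hpb x).symm⟩
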